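/- arXiv:1206.1937 — 2 statements merged into one kernel-verified Lean document; each statement's English description precedes it below -/
import Mathlib

section
/- Let T be a tree, i.e., a simple graph (on a possibly infinite vertex set) that is connected and acyclic, and let a group Γ act on T by graph automorphisms. Suppose g ∈ Γ has finite order and acts on T without edge inversions, meaning there is no pair of adjacent vertices u, v of T with g • u = v and g • v = u. Then there exists a vertex p of T such that g • p = p. -/
open SimpleGraph

private lemma Walk.getVert_map' {V W : Type*} {G : SimpleGraph V} {G' : SimpleGraph W}
    (f : G →g G') {u v : V} (p : G.Walk u v) (i : ℕ) :
    (p.map f).getVert i = f (p.getVert i) := by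
  induction p generalizing i with
  | nil => simp [SimpleGraph.Walk.getVert]
  | cons h q ih => cases i <;> simp [SimpleGraph.Walk.getVert, ih]

private lemma getVert_one_takeUntil {V : Type*} {G : SimpleGraph V} [DecidableEq V]
    {b c x : V} (q : G.Walk b c) (hx : x ∈ q.support) (hxb : x ≠ b) :
    (q.takeUntil x hx).getVert 1 = q.getVert 1 := by
  have hsp := q.take_spec hx
  have h1 : 0 < (q.takeUntil x hx).length := by
    rcases Nat.eq_zero_or_pos (q.takeUntil x hx).length with h0 | h0
    · exact absurd (Walk.eq_of_length_eq_zero h0).symm hxb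
    · exact h0
  conv_rhs => rw [← hsp]
  rw [Walk.getVert_append]
  split_ifs with h
  · rfl
  · have hl : (q.takeUntil x hx).length = 1 := by omega
    rw [hl]
    simp only [Nat.sub_self, Walk.getVert_zero]
    rw [← hl, Walk.getVert_length]

/-- In a tree, appending two paths whose first edges out of the junction differ
yields a path. -/
private lemma tree_append_isPath {V : Type*} {T : SimpleGraph V} (hT : T.IsTree)
    {a b c : V} (r : T.Walk a b) (q : T.Walk b c)
    (hr : r.IsPath) (hq : q.IsPath)
    (hne : r.reverse.getVert 1 ≠ q.getVert 1) : (r.append q).IsPath := by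
  classical
  rw [Walk.isPath_def, Walk.support_append]
  refine List.Nodup.append hr.support_nodup (hq.support_nodup.tail) ?_
  intro x hx1 hx2
  have hxq : x ∈ q.support := List.mem_of_mem_tail hx2
  have hxb : x ≠ b := by
    intro hxb
    subst hxb
    have hnod := hq.support_nodup
    rw [q.support_eq_cons] at hnod
    exact (List.nodup_cons.mp hnod).1 hx2
  have hxr : x ∈ r.reverse.support := by
    rw [Walk.support_reverse]; exact List.mem_reverse.mpr hx1
  have heq : r.reverse.takeUntil x hxr = q.takeUntil x hxq := by
    obtain ⟨w, -, hw⟩ := hT.existsUnique_path b x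
    exact (hw _ (hr.reverse.takeUntil hxr)).trans (hw _ (hq.takeUntil hxq)).symm
  apply hne
  rw [← getVert_one_takeUntil r.reverse hxr hxb, ← getVert_one_takeUntil q hxq hxb, heq]

/-- The second vertex from the far end of an append is that of the second walk. -/
private lemma reverse_getVert_one_append {V : Type*} {T : SimpleGraph V}
    {a b c : V} (r : T.Walk a b) (q : T.Walk b c) (hq : 0 < q.length) :
    (r.append q).reverse.getVert 1 = q.reverse.getVert 1 := by
  rw [Walk.reverse_append, Walk.getVert_append, Walk.length_reverse]
  split_ifs with h
  · rfl
  · have hl : q.length = 1 := by omega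
    rw [hl, Nat.sub_self, Walk.getVert_zero, Walk.getVert_reverse, hl, Nat.sub_self,
      Walk.getVert_zero]

/-- The action of a single group element as a graph homomorphism. -/
private def actHom {V : Type*} {Γ : Type*} [Group Γ] [MulAction Γ V] (T : SimpleGraph V)
    (hact : ∀ (h : Γ) (u v : V), T.Adj u v → T.Adj (h • u) (h • v)) (h : Γ) : T →g T :=
  ⟨fun x => h • x, fun {a b} hab => hact h a b hab⟩

@[simp] private lemma actHom_apply {V : Type*} {Γ : Type*} [Group Γ] [MulAction Γ V]
    (T : SimpleGraph V) (hact : ∀ (h : Γ) (u v : V), T.Adj u v → T.Adj (h • u) (h • v))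
    (h : Γ) (x : V) : actHom T hact h x = h • x := rfl

/-- If a group element `g` of finite order acts on a tree `T`
(by graph automorphisms) without edge inversions, then `g` fixes some vertex. -/
theorem finite_order_no_inversion_has_fixed_vertex
    {V : Type*} {Γ : Type*} [Group Γ] [MulAction Γ V]
    (T : SimpleGraph V) (hT : T.IsTree)
    (hact : ∀ (h : Γ) (u v : V), T.Adj u v → T.Adj (h • u) (h • v))
    (g : Γ) (hg : IsOfFinOrder g)
    (hnoinv : ¬ ∃ u v : V, T.Adj u v ∧ g • u = v ∧ g • v = u) :
    ∃ p : V, g • p = p := by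
  classical
  obtain ⟨n, hn, hgn⟩ := isOfFinOrder_iff_pow_eq_one.mp hg
  have hconn : T.Connected := hT.isConnected
  have hnonempty : (Set.range fun w : V => T.dist w (g • w)).Nonempty :=
    Set.range_nonempty_iff_nonempty.mpr hconn.nonempty
  obtain ⟨v, hv⟩ := Nat.sInf_mem hnonempty
  obtain ⟨m, hm⟩ : ∃ m, m = sInf (Set.range fun w : V => T.dist w (g • w)) := ⟨_, rfl⟩
  have hv' : T.dist v (g • v) = m := by rw [hm]; exact hv
  have hmin : ∀ w : V, m ≤ T.dist w (g • w) := fun w => hm ▸ Nat.sInf_le ⟨w, rfl⟩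
  rcases Nat.eq_zero_or_pos m with hm0 | hmpos
  · refine ⟨v, ?_⟩
    have h0 : T.dist v (g • v) = 0 := by rw [hv', hm0]
    exact ((hconn.dist_eq_zero_iff).mp h0).symm
  · exfalso
    obtain ⟨w0, hw0⟩ := hconn.exists_walk_length_eq_dist v (g • v)
    set p : T.Walk v (g • v) := w0.bypass with hp
    have hppath : p.IsPath := w0.bypass_isPath
    have hplen : p.length = m := by
      have h1 : p.length ≤ m := by rw [← hv', ← hw0]; exact w0.length_bypass_le
      have h2 : m ≤ p.length := by rw [← hv']; exact T.dist_le p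
      omega
    set x1 := p.getVert 1 with hx1
    set y := p.reverse.getVert 1 with hy
    have hyval : y = p.getVert (m - 1) := by rw [hy, Walk.getVert_reverse, hplen]
    by_cases hcase : g • x1 = y
    · -- backtracking case
      rcases Nat.lt_or_ge m 2 with hm1 | hm2
      · -- m = 1 : inversion
        have hm1' : m = 1 := by omega
        have hl : p.length = 1 := by rw [hplen, hm1']
        have hx1v : x1 = g • v := by rw [hx1, ← hl]; exact p.getVert_length
        have hyv : y = v := by rw [hyval, hm1']; simp
        have hadj : T.Adj v (g • v) := by
          have h0 := p.adj_getVert_succ (i := 0) (by omega)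
          rw [p.getVert_zero] at h0
          rw [← hx1, hx1v] at h0
          exact h0
        exact hnoinv ⟨v, g • v, hadj, rfl, by rw [← hx1v, hcase, hyv]⟩
      · -- m ≥ 2 : a vertex with smaller displacement, contradiction
        have hnp : ¬ p.Nil := Walk.not_nil_iff_lt_length.mpr (by omega)
        set t := p.tail with ht
        have htlen : t.length = m - 1 := by
          have h0 := Walk.length_tail_add_one hnp
          rw [hplen] at h0; rw [← ht] at h0; omega
        have hnt : ¬ t.reverse.Nil :=
          Walk.not_nil_iff_lt_length.mpr (by rw [Walk.length_reverse]; omega)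
        set s := t.reverse.tail with hs
        have hslen : s.length = m - 2 := by
          have h0 := Walk.length_tail_add_one hnt
          rw [← hs] at h0; rw [Walk.length_reverse, htlen] at h0; omega
        have hstart : t.reverse.getVert 1 = y := by
          rw [Walk.getVert_reverse, htlen]
          have h0 : t.getVert (m - 1 - 1) = p.getVert (m - 1 - 1 + 1) := Walk.getVert_tail p
          rw [h0, hyval]
          congr 1
          omega
        have hdle : T.dist y x1 ≤ m - 2 := by
          have h0 := T.dist_le (s.copy hstart rfl)
          rwa [Walk.length_copy, hslen] at h0
        have h1 : m ≤ T.dist x1 (g • x1) := hmin x1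
        rw [hcase] at h1
        rw [T.dist_comm] at hdle
        omega
    · -- no backtracking: build arbitrarily long paths
      have key : ∀ k : ℕ, ∃ r : T.Walk v ((g ^ (k + 1)) • v),
          r.IsPath ∧ r.length = (k + 1) * m ∧ r.reverse.getVert 1 = (g ^ k) • y := by
        intro k
        induction k with
        | zero =>
          refine ⟨p.copy rfl (by rw [pow_one]), ?_, ?_, ?_⟩
          · simpa using hppath
          · simpa using hplen
          · simp [Walk.reverse_copy, ← hy]
        | succ k ih =>
          obtain ⟨r, hrpath, hrlen, hrv⟩ := ih
          have hend : (g ^ (k + 1)) • (g • v) = (g ^ (k + 2)) • v := by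
            rw [smul_smul, ← pow_succ]
          set q : T.Walk ((g ^ (k + 1)) • v) ((g ^ (k + 2)) • v) :=
            (p.map (actHom T hact (g ^ (k + 1)))).copy (actHom_apply T hact _ v) ((actHom_apply T hact _ (g • v)).trans hend) with hq
          have hqpath : q.IsPath := by
            rw [hq, Walk.isPath_copy]
            exact Walk.map_isPath_of_injective (MulAction.injective _) hppath
          have hqlen : q.length = m := by
            rw [hq, Walk.length_copy, Walk.length_map, hplen]
          have hq1 : q.getVert 1 = (g ^ (k + 1)) • x1 := by
            rw [hq, Walk.getVert_copy, Walk.getVert_map', ← hx1, actHom_apply]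
          have hne' : r.reverse.getVert 1 ≠ q.getVert 1 := by
            rw [hrv, hq1]
            intro h
            apply hcase
            have h2 : ((g ^ k)⁻¹ * g ^ (k + 1)) • x1 = y := by
              rw [mul_smul, ← h, ← mul_smul, inv_mul_cancel, one_smul]
            rwa [pow_succ, ← mul_assoc, inv_mul_cancel, one_mul] at h2
          refine ⟨r.append q, tree_append_isPath hT r q hrpath hqpath hne', ?_, ?_⟩
          · rw [Walk.length_append, hrlen, hqlen]; ring
          · rw [reverse_getVert_one_append r q (by omega), Walk.getVert_reverse, hqlen,
              hq, Walk.getVert_copy, Walk.getVert_map', ← hyval, actHom_apply]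
      obtain ⟨r, hrpath, hrlen, -⟩ := key (n - 1)
      have hnn : n - 1 + 1 = n := by omega
      have hvv : (g ^ (n - 1 + 1)) • v = v := by rw [hnn, hgn, one_smul]
      have hnil : (r.copy rfl hvv) = Walk.nil := by
        obtain ⟨w, -, hw⟩ := hT.existsUnique_path v v
        have h1 : r.copy rfl hvv = w := hw _ (by show (r.copy rfl hvv).IsPath; rw [Walk.isPath_copy]; exact hrpath)
        have h2 : (Walk.nil : T.Walk v v) = w := hw _ Walk.IsPath.nil
        exact h1.trans h2.symm
      have hlen0 := congrArg Walk.length hnil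
      rw [Walk.length_copy, hrlen] at hlen0
      simp only [Walk.length_nil] at hlen0
      have hpos : (n - 1 + 1) * m > 0 := Nat.mul_pos (by omega) hmpos
      omega
end

section
/- Let T be a tree, i.e., a simple graph (on a possibly infinite vertex set) that is connected and acyclic, and let a group Γ act on T by graph automorphisms so that no element of Γ inverts an edge of T. Let n ≥ 1 and let a₁, …, aₙ ∈ Γ and integers α₁, …, αₙ ≥ 2 and β_{i,j} ≥ 2 (for 1 ≤ i < j ≤ n) be such that aᵢ^{αᵢ} = 1 for all i and (aᵢ aⱼ)^{β_{i,j}} = 1 for all 1 ≤ i < j ≤ n. Then there exists a vertex p of T that is fixed by every element of the subgroup of Γ generated by a₁, …, aₙ. (In particular, every action without edge inversions of the presented group Gₙ = ⟨a₁,…,aₙ | a₁^{α₁} = ⋯ = aₙ^{αₙ} = (aᵢaⱼ)^{β_{i,j}} = 1, 1 ≤ i < j ≤ n⟩ on a tree has a fixed vertex.) -/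
namespace CoxeterTreeAux
open SimpleGraph Walk

variable {V : Type*} {T : SimpleGraph V}

lemma path_eq (hT : T.IsTree) {u v : V} {p q : T.Walk u v} (hp : p.IsPath) (hq : q.IsPath) :
    p = q :=
  (hT.existsUnique_path u v).unique hp hq

lemma path_length_eq_dist (hT : T.IsTree) {u v : V} {p : T.Walk u v} (hp : p.IsPath) :
    p.length = T.dist u v := by
  obtain ⟨q, hq, hql⟩ := hT.isConnected.exists_path_of_dist u v
  rw [path_eq hT hp hq]; exact hql

lemma penult_append {u v w : V} (p : T.Walk u v) (q : T.Walk v w) (hq : ¬ q.Nil) :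
    (p.append q).getVert ((p.append q).length - 1) = q.getVert (q.length - 1) := by
  have hq1 : 0 < q.length := (Walk.not_nil_iff_lt_length).mp hq
  rw [Walk.getVert_append, Walk.length_append, if_neg (by omega)]
  congr 1
  omega

lemma snd_append {u v w : V} (p : T.Walk u v) (q : T.Walk v w) (hp : ¬ p.Nil) :
    (p.append q).getVert 1 = p.getVert 1 := by
  have hp1 : 0 < p.length := (Walk.not_nil_iff_lt_length).mp hp
  rw [Walk.getVert_append]
  rcases Nat.lt_or_ge 1 p.length with h | h
  · rw [if_pos h]
  · have h1 : p.length = 1 := by omega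
    rw [if_neg (by omega)]
    have : q.getVert (1 - p.length) = v := by rw [h1]; simp
    rw [this, ← h1, Walk.getVert_length]

/-- distance from start of a walk to its penultimate vertex -/
lemma dist_to_penult {u v : V} (p : T.Walk u v) (hp : ¬ p.Nil) :
    T.dist u (p.getVert (p.length - 1)) ≤ p.length - 1 := by
  have h1 : ¬ p.reverse.Nil := by
    rw [Walk.not_nil_iff_lt_length, Walk.length_reverse]
    exact (Walk.not_nil_iff_lt_length).mp hp
  have h2 := Walk.length_tail_add_one h1
  have h3 : p.reverse.getVert 1 = p.getVert (p.length - 1) := by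
    rw [Walk.getVert_reverse]
  calc T.dist u (p.getVert (p.length - 1)) = T.dist u (p.reverse.getVert 1) := by rw [h3]
    _ ≤ (p.reverse.tail).reverse.length := SimpleGraph.dist_le _
    _ ≤ p.length - 1 := by
        rw [Walk.length_reverse]
        rw [Walk.length_reverse] at h2
        omega

/-- Key concatenation lemma: two paths meeting without backtracking form a path. -/
lemma append_isPath (hT : T.IsTree) {a b c : V} {p : T.Walk a b} {q : T.Walk b c}
    (hp : p.IsPath) (hq : q.IsPath)
    (hj : ¬ p.Nil → ¬ q.Nil → p.getVert (p.length - 1) ≠ q.getVert 1) :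
    (p.append q).IsPath := by
  classical
  rw [Walk.isPath_def, Walk.support_append, List.nodup_append']
  refine ⟨hp.support_nodup, (hq.support_nodup).tail, ?_⟩
  intro x hxp hxq
  -- x in p.support and in q.support.tail
  have hxq' : x ∈ q.support := List.mem_of_mem_tail hxq
  have hxb : x ≠ b := by
    rintro rfl
    have := hq.support_nodup
    rw [Walk.support_eq_cons] at this
    exact (List.nodup_cons.mp this).1 hxq
  -- q is not nil
  have hqn : ¬ q.Nil := by
    intro hn
    rw [Walk.nil_iff_support_eq] at hn
    rw [hn] at hxq
    simp at hxq
  have hpn : ¬ p.Nil := by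
    intro hn
    have hab : a = b := hn.eq
    rw [Walk.nil_iff_support_eq] at hn
    rw [hn] at hxp
    simp at hxp
    exact hxb (hxp.trans hab)
  set p₂ := p.dropUntil x hxp with hp₂def
  set q₁ := q.takeUntil x hxq' with hq₁def
  have hp₂ : p₂.IsPath := hp.dropUntil hxp
  have hq₁ : q₁.IsPath := hq.takeUntil hxq'
  have hp₂n : ¬ p₂.Nil := Walk.not_nil_of_ne hxb
  have hq₁n : ¬ q₁.Nil := Walk.not_nil_of_ne (Ne.symm hxb)
  have hq₁len : 0 < q₁.length := (Walk.not_nil_iff_lt_length).mp hq₁n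
  have e1 : p.getVert (p.length - 1) = p₂.getVert (p₂.length - 1) := by
    conv_lhs => rw [← Walk.take_spec p hxp]
    exact penult_append _ _ hp₂n
  have e2 : q.getVert 1 = q₁.getVert 1 := by
    conv_lhs => rw [← Walk.take_spec q hxq']
    exact snd_append _ _ hq₁n
  have e3 : p₂ = q₁.reverse := path_eq hT hp₂ hq₁.reverse
  have e4 : p₂.getVert (p₂.length - 1) = q₁.getVert 1 := by
    rw [e3, Walk.getVert_reverse, Walk.length_reverse]
    congr 1
    omega
  exact hj hpn hqn (e1.trans (e4.trans e2.symm))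

lemma dist_junction (hT : T.IsTree) {a b c : V} {p : T.Walk a b} {q : T.Walk b c}
    (hp : p.IsPath) (hq : q.IsPath)
    (hj : ¬ p.Nil → ¬ q.Nil → p.getVert (p.length - 1) ≠ q.getVert 1) :
    T.dist a c = p.length + q.length := by
  have h := append_isPath hT hp hq hj
  have := path_length_eq_dist hT h
  rw [Walk.length_append] at this
  omega

lemma mem_support_of_dist_eq (hT : T.IsTree) {a b c : V}
    (hd : T.dist a b + T.dist b c = T.dist a c)
    {w : T.Walk a c} (hw : w.IsPath) : b ∈ w.support := by
  obtain ⟨P, hP, hPl⟩ := hT.isConnected.exists_path_of_dist a b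
  obtain ⟨Q, hQ, hQl⟩ := hT.isConnected.exists_path_of_dist b c
  by_cases hj : ¬ P.Nil → ¬ Q.Nil → P.getVert (P.length - 1) ≠ Q.getVert 1
  · have hpath := append_isPath hT hP hQ hj
    have : w = P.append Q := path_eq hT hw hpath
    rw [this, Walk.mem_support_append_iff]
    exact Or.inl P.end_mem_support
  · push_neg at hj
    obtain ⟨hPn, hQn, heq⟩ := hj
    have hP1 : 0 < P.length := (Walk.not_nil_iff_lt_length).mp hPn
    have hQ1 : 0 < Q.length := (Walk.not_nil_iff_lt_length).mp hQn
    set y := P.getVert (P.length - 1) with hy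
    have d1 : T.dist a y ≤ P.length - 1 := dist_to_penult P hPn
    have d2 : T.dist y c ≤ Q.length - 1 := by
      rw [heq]
      calc T.dist (Q.getVert 1) c ≤ Q.tail.length := SimpleGraph.dist_le Q.tail
        _ = Q.length - 1 := by have := Walk.length_tail_add_one hQn; omega
    have tri : T.dist a c ≤ T.dist a y + T.dist y c :=
      hT.isConnected.dist_triangle
    omega

section Action

variable {Γ : Type*} [Group Γ] [MulAction Γ V]

/-- The graph homomorphism given by the action of `g`. -/
def smulHom (hact : ∀ (h : Γ) (u v : V), T.Adj u v → T.Adj (h • u) (h • v)) (g : Γ) :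
    T →g T where
  toFun := fun v => g • v
  map_rel' := fun h => hact g _ _ h

@[simp] lemma smulHom_apply (hact : ∀ (h : Γ) (u v : V), T.Adj u v → T.Adj (h • u) (h • v))
    (g : Γ) (v : V) : smulHom hact g v = g • v := rfl

lemma getVert_map {W : Type*} {H : SimpleGraph W} (f : T →g H) {u v : V}
    (p : T.Walk u v) (i : ℕ) : (p.map f).getVert i = f (p.getVert i) := by
  induction p generalizing i with
  | nil => simp [Walk.getVert_of_length_le]
  | cons h q ih =>
    cases i with
    | zero => simp
    | succ n => simpa [Walk.getVert_cons_succ] using ih n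

variable (hact : ∀ (h : Γ) (u v : V), T.Adj u v → T.Adj (h • u) (h • v))

include hact in
/-- Torsion elements admitting a "non-backtracking" path from `p` to `g • p` must fix `p`. -/
lemma fixed_of_torsion_segment (hT : T.IsTree) {g : Γ} {p : V}
    {s : T.Walk p (g • p)} (hs : s.IsPath)
    (hj : ¬ s.Nil → s.getVert (s.length - 1) ≠ g • s.getVert 1)
    {m : ℕ} (hm : 1 ≤ m) (hgm : g ^ m = 1) : g • p = p := by
  by_contra hne
  have hsn : ¬ s.Nil := by
    intro hn
    exact hne hn.eq.symm
  have hjj := hj hsn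
  have hL : 0 < s.length := (Walk.not_nil_iff_lt_length).mp hsn
  set L := s.length with hLdef
  set z := s.getVert (s.length - 1) with hzdef
  -- the key induction
  have key : ∀ k : ℕ, 1 ≤ k → ∃ W : T.Walk p ((g ^ k) • p),
      W.IsPath ∧ W.length = k * L ∧ W.getVert (W.length - 1) = (g ^ (k - 1)) • z := by
    intro k hk
    induction k, hk using Nat.le_induction with
    | base =>
      refine ⟨s.copy rfl (by rw [pow_one]), ?_, ?_, ?_⟩
      · simpa using hs
      · simp [hLdef]
      · simp [← hzdef]
    | succ k hk ih =>
      obtain ⟨W, hWp, hWl, hWpen⟩ := ih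
      have ecast : (g ^ k) • (g • p) = (g ^ (k + 1)) • p := by
        rw [smul_smul, ← pow_succ]
      set seg := (s.map (smulHom hact (g ^ k))).copy (smulHom_apply hact _ _) ((smulHom_apply hact _ _).trans ecast) with hsegdef
      have hsegp : seg.IsPath := by
        rw [hsegdef, Walk.isPath_copy]
        exact Walk.map_isPath_of_injective (MulAction.injective _) hs
      have hseglen : seg.length = L := by
        rw [hsegdef, Walk.length_copy, Walk.length_map]
      have hsegn : ¬ seg.Nil := by
        rw [Walk.not_nil_iff_lt_length, hseglen]; exact hL
      have hsegVert : ∀ i, seg.getVert i = (g ^ k) • s.getVert i := by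
        intro i
        rw [hsegdef]
        rw [Walk.getVert_copy, getVert_map, smulHom_apply]
      have hWn : ¬ W.Nil := by
        rw [Walk.not_nil_iff_lt_length, hWl]
        exact Nat.mul_pos (by omega) hL
      refine ⟨W.append seg, ?_, ?_, ?_⟩
      · apply append_isPath hT hWp hsegp
        intro _ _
        rw [hWpen, hsegVert]
        intro hcontra
        have hgk : g ^ k = g ^ (k - 1) * g := by
          have : k - 1 + 1 = k := by omega
          rw [← this, pow_succ]
          simp
        rw [hgk, mul_smul] at hcontra
        exact hjj (MulAction.injective (g ^ (k - 1)) hcontra)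
      · rw [Walk.length_append, hWl, hseglen]; ring
      · rw [penult_append _ _ hsegn, hsegVert, hseglen]
        simp [← hzdef, hLdef]
  obtain ⟨W, hWp, hWl, -⟩ := key m hm
  have hfix : (g ^ m) • p = p := by rw [hgm, one_smul]
  have := path_length_eq_dist hT hWp
  rw [hWl, hfix] at this
  rw [SimpleGraph.dist_self] at this
  have : m * L = 0 := this
  have := Nat.mul_eq_zero.mp this
  omega

include hact in
lemma exists_fixed_of_torsion (hT : T.IsTree)
    (hnoinv : ∀ (h : Γ), ¬ ∃ u v : V, T.Adj u v ∧ h • u = v ∧ h • v = u)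
    {g : Γ} {m : ℕ} (hm : 1 ≤ m) (hgm : g ^ m = 1) :
    ∃ v : V, g • v = v := by
  have hne : Nonempty V := hT.isConnected.nonempty
  set S : Set ℕ := Set.range (fun v : V => T.dist v (g • v)) with hS
  have hSne : S.Nonempty := Set.range_nonempty _
  obtain ⟨v, hv0⟩ := Nat.sInf_mem hSne
  set D := sInf S with hD
  have hv : T.dist v (g • v) = D := hv0
  have hmin : ∀ u : V, D ≤ T.dist u (g • u) := fun u => Nat.sInf_le ⟨u, rfl⟩
  rcases Nat.eq_zero_or_pos D with h0 | hDpos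
  · refine ⟨v, ?_⟩
    rw [h0] at hv
    have : v = g • v := hT.isConnected.dist_eq_zero_iff.mp hv
    exact this.symm
  · obtain ⟨s, hs, hsl⟩ := hT.isConnected.exists_path_of_dist v (g • v)
    have hsL : 0 < s.length := by rw [hsl, hv]; exact hDpos
    have hsn : ¬ s.Nil := (Walk.not_nil_iff_lt_length).mpr hsL
    refine ⟨v, ?_⟩
    apply fixed_of_torsion_segment hact hT hs ?_ hm hgm
    intro _ heq
    -- heq : penultimate = g • snd
    rcases Nat.lt_or_ge s.length 2 with hD1 | hD2
    · -- length = 1 : edge inversion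
      have h1 : s.length = 1 := by omega
      have hpen : s.getVert (s.length - 1) = v := by rw [h1]; simp
      have hsnd : s.getVert 1 = g • v := by rw [← h1, Walk.getVert_length]
      rw [hpen, hsnd] at heq
      have hadj : T.Adj v (g • v) := by
        have := Walk.adj_getVert_succ s (by omega : 0 < s.length)
        simpa [hsnd] using this
      exact hnoinv g ⟨v, g • v, hadj, rfl, heq.symm⟩
    · -- length ≥ 2 : contradiction with minimality
      set x := s.getVert 1 with hx
      have htn : ¬ s.tail.Nil := by
        rw [Walk.not_nil_iff_lt_length]
        have := Walk.length_tail_add_one hsn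
        omega
      have htlen : s.tail.length = s.length - 1 := by
        have := Walk.length_tail_add_one hsn; omega
      have hpen' : s.tail.getVert (s.tail.length - 1) = s.getVert (s.length - 1) := by
        rw [Walk.getVert_tail _, htlen]
        congr 1
        omega
      have hd : T.dist x (g • x) ≤ s.length - 2 := by
        have := dist_to_penult s.tail htn
        rw [hpen', heq, htlen] at this
        change T.dist x (g • x) ≤ s.length - 1 - 1 at this
        omega
      have := hmin x
      rw [hv] at hsl
      omega

include hact in
lemma exists_common_fixed_pair (hT : T.IsTree) {g h : Γ}
    (hg' : ∃ v : V, g • v = v) (hh' : ∃ v : V, h • v = v)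
    {m : ℕ} (hm : 1 ≤ m) (hgh : (g * h) ^ m = 1) :
    ∃ v : V, g • v = v ∧ h • v = v := by
  set S : Set ℕ := {d : ℕ | ∃ x y : V, g • x = x ∧ h • y = y ∧ T.dist x y = d} with hS
  have hSne : S.Nonempty := by
    obtain ⟨x, hx⟩ := hg'
    obtain ⟨y, hy⟩ := hh'
    exact ⟨T.dist x y, x, y, hx, hy, rfl⟩
  obtain ⟨p, q, hgp, hhq, hpq⟩ := Nat.sInf_mem hSne
  set D := sInf S with hD
  have hmin : ∀ x y : V, g • x = x → h • y = y → D ≤ T.dist x y :=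
    fun x y hx hy => Nat.sInf_le ⟨x, y, hx, hy, rfl⟩
  rcases Nat.eq_zero_or_pos D with h0 | hDpos
  · rw [h0] at hpq
    have : p = q := hT.isConnected.dist_eq_zero_iff.mp hpq
    exact ⟨p, hgp, this ▸ hhq⟩
  obtain ⟨w, hw, hwl⟩ := hT.isConnected.exists_path_of_dist p q
  have hwL : 0 < w.length := by rw [hwl, hpq]; exact hDpos
  have hwn : ¬ w.Nil := (Walk.not_nil_iff_lt_length).mpr hwL
  -- first piece : from p to g • q
  set P := (w.map (smulHom hact g)).copy ((smulHom_apply hact _ _).trans hgp) (smulHom_apply hact _ _) with hPdef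
  -- second piece : from g • q to (g*h) • p
  have ecast : (g * h) • q = g • q := by rw [mul_smul, hhq]
  set Q := (w.reverse.map (smulHom hact (g * h))).copy ((smulHom_apply hact _ _).trans ecast) (smulHom_apply hact _ _) with hQdef
  have hPp : P.IsPath := by
    rw [hPdef, Walk.isPath_copy]
    exact Walk.map_isPath_of_injective (MulAction.injective _) hw
  have hQp : Q.IsPath := by
    rw [hQdef, Walk.isPath_copy]
    exact Walk.map_isPath_of_injective (MulAction.injective _) hw.reverse
  have hPlen : P.length = w.length := by rw [hPdef, Walk.length_copy, Walk.length_map]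
  have hQlen : Q.length = w.length := by rw [hQdef, Walk.length_copy, Walk.length_map, Walk.length_reverse]
  have hPn : ¬ P.Nil := by rw [Walk.not_nil_iff_lt_length, hPlen]; exact hwL
  have hQn : ¬ Q.Nil := by rw [Walk.not_nil_iff_lt_length, hQlen]; exact hwL
  have hPvert : ∀ i, P.getVert i = g • w.getVert i := by
    intro i; rw [hPdef, Walk.getVert_copy, getVert_map, smulHom_apply]
  have hQvert : ∀ i, Q.getVert i = (g * h) • w.getVert (w.length - i) := by
    intro i; rw [hQdef, Walk.getVert_copy, getVert_map, smulHom_apply, Walk.getVert_reverse]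
  -- shortcut distances
  have hdist_pen : T.dist p (w.getVert (w.length - 1)) ≤ w.length - 1 :=
    dist_to_penult w hwn
  have hdist_snd : T.dist (w.getVert 1) q ≤ w.length - 1 := by
    have := dist_to_penult w.reverse (by
      rw [Walk.not_nil_iff_lt_length, Walk.length_reverse]; exact hwL)
    rw [Walk.getVert_reverse, Walk.length_reverse] at this
    have h1 : w.length - (w.length - 1) = 1 := by omega
    rw [h1] at this
    calc T.dist (w.getVert 1) q = T.dist q (w.getVert 1) := T.dist_comm
      _ ≤ w.length - 1 := this
  -- the segment
  set s := P.append Q with hsdef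
  have hjP : ¬ P.Nil → ¬ Q.Nil → P.getVert (P.length - 1) ≠ Q.getVert 1 := by
    intro _ _ hcontra
    rw [hPvert, hQvert, hPlen] at hcontra
    set y := w.getVert (w.length - 1) with hy
    rw [mul_smul] at hcontra
    have : y = h • y := MulAction.injective g hcontra
    have hDy := hmin p y hgp this.symm
    rw [hwl, hpq] at hdist_pen
    omega
  have hsp : s.IsPath := append_isPath hT hPp hQp hjP
  have hspen : s.getVert (s.length - 1) = (g * h) • w.getVert 1 := by
    have hidx : w.length - (w.length - 1) = 1 := by omega
    rw [hsdef, penult_append _ _ hQn, hQvert, hQlen, hidx]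
  have hssnd : s.getVert 1 = g • w.getVert 1 := by
    rw [hsdef, snd_append _ _ hPn, hPvert]
  have hfix : (g * h) • p = p := by
    apply fixed_of_torsion_segment hact hT hsp ?_ hm hgh
    intro _
    rw [hspen, hssnd]
    intro hcontra
    have : w.getVert 1 = g • w.getVert 1 := MulAction.injective (g * h) hcontra
    set x := w.getVert 1 with hx
    have hDx := hmin x q this.symm hhq
    rw [hwl, hpq] at hdist_snd
    omega
  refine ⟨p, hgp, ?_⟩
  have : g • (h • p) = g • p := by
    rw [← mul_smul, hfix, hgp]
  exact MulAction.injective g this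

end Action

/-- Convexity of a set of vertices: closed under vertices of paths between members. -/
def TConvex (T : SimpleGraph V) (C : Set V) : Prop :=
  ∀ ⦃x y : V⦄, x ∈ C → y ∈ C → ∀ ⦃w : T.Walk x y⦄, w.IsPath → ∀ z ∈ w.support, z ∈ C

lemma TConvex.inter {C D : Set V} (hC : TConvex T C) (hD : TConvex T D) :
    TConvex T (C ∩ D) := fun _ _ hx hy _ hw z hz =>
  ⟨hC hx.1 hy.1 hw z hz, hD hx.2 hy.2 hw z hz⟩

lemma list_map_eq_self {α : Type*} {f : α → α} :
    ∀ {l : List α}, l.map f = l → ∀ x ∈ l, f x = x := by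
  intro l
  induction l with
  | nil => simp
  | cons a t ih =>
    intro hmap x hx
    rw [List.map_cons, List.cons.injEq] at hmap
    rcases List.mem_cons.mp hx with rfl | hx
    · exact hmap.1
    · exact ih hmap.2 x hx

section Action2

variable {Γ : Type*} [Group Γ] [MulAction Γ V]
variable (hact : ∀ (h : Γ) (u v : V), T.Adj u v → T.Adj (h • u) (h • v))

include hact in
lemma fix_tconvex (hT : T.IsTree) (g : Γ) : TConvex T {v : V | g • v = v} := by
  intro x y hx hy w hw z hz
  have hx' : g • x = x := hx
  have hy' : g • y = y := hy
  set w' := (w.map (smulHom hact g)).copy ((smulHom_apply hact _ _).trans hx') ((smulHom_apply hact _ _).trans hy') with hw'def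
  have hw'p : w'.IsPath := by
    rw [hw'def, Walk.isPath_copy]
    exact Walk.map_isPath_of_injective (MulAction.injective _) hw
  have heq : w' = w := path_eq hT hw'p hw
  have hsup : w.support.map (fun v => g • v) = w.support := by
    have : w'.support = w.support := by rw [heq]
    rw [hw'def, Walk.support_copy, Walk.support_map] at this
    exact this
  exact list_map_eq_self hsup z hz

end Action2

/-- Gate property of convex sets in a tree. -/
lemma gate_lemma (hT : T.IsTree) {C : Set V} (hC : TConvex T C) (hne : C.Nonempty)
    (c : V) : ∃ p ∈ C, ∀ x ∈ C, T.dist c x = T.dist c p + T.dist p x := by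
  set S : Set ℕ := {d : ℕ | ∃ x ∈ C, T.dist c x = d} with hS
  have hSne : S.Nonempty := by
    obtain ⟨x, hx⟩ := hne
    exact ⟨T.dist c x, x, hx, rfl⟩
  obtain ⟨p, hpC, hpd⟩ := Nat.sInf_mem hSne
  set D := sInf S with hD
  have hmin : ∀ x ∈ C, D ≤ T.dist c x := fun x hx => Nat.sInf_le ⟨x, hx, rfl⟩
  refine ⟨p, hpC, ?_⟩
  intro x hx
  obtain ⟨P, hP, hPl⟩ := hT.isConnected.exists_path_of_dist c p
  obtain ⟨Q, hQ, hQl⟩ := hT.isConnected.exists_path_of_dist p x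
  have hj : ¬ P.Nil → ¬ Q.Nil → P.getVert (P.length - 1) ≠ Q.getVert 1 := by
    intro hPn hQn heq
    have hP1 : 0 < P.length := (Walk.not_nil_iff_lt_length).mp hPn
    have hQ1 : 0 < Q.length := (Walk.not_nil_iff_lt_length).mp hQn
    set y := P.getVert (P.length - 1) with hy
    have hyQ : y ∈ Q.support := by
      rw [Walk.mem_support_iff_exists_getVert]
      exact ⟨1, heq.symm, by omega⟩
    have hyC : y ∈ C := hC hpC hx hQ y hyQ
    have hdy : T.dist c y ≤ P.length - 1 := dist_to_penult P hPn
    have := hmin y hyC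
    rw [hPl, hpd] at hP1 hdy
    omega
  have := dist_junction hT hP hQ hj
  rw [hPl, hQl] at this
  exact this

/-- Helly property for three convex sets in a tree. -/
lemma helly3 (hT : T.IsTree) {C₁ C₂ C₃ : Set V}
    (h₁ : TConvex T C₁) (h₂ : TConvex T C₂) (h₃ : TConvex T C₃)
    (h₁₂ : (C₁ ∩ C₂).Nonempty) (h₁₃ : (C₁ ∩ C₃).Nonempty) (h₂₃ : (C₂ ∩ C₃).Nonempty) :
    (C₁ ∩ C₂ ∩ C₃).Nonempty := by
  obtain ⟨c, hc₁, hc₂⟩ := h₁₂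
  obtain ⟨p, hp₃, hgate⟩ := gate_lemma hT h₃ (h₁₃.mono (Set.inter_subset_right)) c
  have key : ∀ (Ci : Set V), TConvex T Ci → c ∈ Ci → (Ci ∩ C₃).Nonempty → p ∈ Ci := by
    intro Ci hCi hcCi hCi₃
    obtain ⟨q, hqCi, hqC₃⟩ := hCi₃
    have hdq := hgate q hqC₃
    obtain ⟨w, hw, hwl⟩ := hT.isConnected.exists_path_of_dist c q
    have hmem : p ∈ w.support :=
      mem_support_of_dist_eq hT hdq.symm hw
    exact hCi hcCi hqCi hw p hmem
  exact ⟨p, ⟨key C₁ h₁ hc₁ h₁₃, key C₂ h₂ hc₂ h₂₃⟩, hp₃⟩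

/-- Helly property for finitely many convex sets in a tree. -/
lemma hellyN (hT : T.IsTree) : ∀ (n : ℕ), 1 ≤ n → ∀ (C : Fin n → Set V),
    (∀ i, TConvex T (C i)) → (∀ i j, (C i ∩ C j).Nonempty) →
    ∃ p : V, ∀ i, p ∈ C i := by
  intro n
  induction n with
  | zero => omega
  | succ n ih =>
    intro _ C hconv hpair
    rcases Nat.eq_zero_or_pos n with rfl | hn
    · obtain ⟨p, hp, -⟩ := hpair 0 0
      refine ⟨p, fun i => ?_⟩
      fin_cases i
      exact hp
    · set D : Fin n → Set V := fun i => C i.castSucc ∩ C (Fin.last n) with hDdef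
      have hDconv : ∀ i, TConvex T (D i) :=
        fun i => (hconv i.castSucc).inter (hconv (Fin.last n))
      have hDpair : ∀ i j, (D i ∩ D j).Nonempty := by
        intro i j
        have h3 := helly3 hT (hconv i.castSucc) (hconv j.castSucc) (hconv (Fin.last n))
          (hpair _ _) (hpair _ _) (hpair _ _)
        obtain ⟨v, ⟨hvi, hvj⟩, hvl⟩ := h3
        exact ⟨v, ⟨hvi, hvl⟩, ⟨hvj, hvl⟩⟩
      obtain ⟨p, hp⟩ := ih hn D hDconv hDpair
      refine ⟨p, fun i => ?_⟩
      induction i using Fin.lastCases with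
      | last => exact (hp ⟨0, hn⟩).2
      | cast i => exact (hp i).1

end CoxeterTreeAux


/-- Let a group `Γ` act on a tree `T` by graph automorphisms
without edge inversions. If `a₁, …, aₙ ∈ Γ` (with `n ≥ 1`) satisfy relations
`aᵢ^{αᵢ} = 1` (`αᵢ ≥ 2`) and `(aᵢ aⱼ)^{β i j} = 1` (`β i j ≥ 2`, `i < j`),
then the subgroup generated by `a₁, …, aₙ` fixes some vertex of `T`. -/
theorem coxeter_like_group_has_fixed_vertex
    {V : Type*} {Γ : Type*} [Group Γ] [MulAction Γ V]
    (T : SimpleGraph V) (hT : T.IsTree)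
    (hact : ∀ (h : Γ) (u v : V), T.Adj u v → T.Adj (h • u) (h • v))
    (hnoinv : ∀ (h : Γ), ¬ ∃ u v : V, T.Adj u v ∧ h • u = v ∧ h • v = u)
    (n : ℕ) (hn : 1 ≤ n) (a : Fin n → Γ)
    (α : Fin n → ℕ) (hα : ∀ i, 2 ≤ α i)
    (β : Fin n → Fin n → ℕ) (hβ : ∀ i j : Fin n, i < j → 2 ≤ β i j)
    (hrel₁ : ∀ i, a i ^ α i = 1)
    (hrel₂ : ∀ i j : Fin n, i < j → (a i * a j) ^ β i j = 1) :
    ∃ p : V, ∀ h ∈ Subgroup.closure (Set.range a), h • p = p := by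
  classical
  set F : Fin n → Set V := fun i => {v : V | a i • v = v} with hF
  have hm : ∀ i, 1 ≤ α i := fun i => le_trans one_le_two (hα i)
  have hFne : ∀ i, ∃ v : V, a i • v = v := fun i =>
    CoxeterTreeAux.exists_fixed_of_torsion hact hT hnoinv (hm i) (hrel₁ i)
  have hconv : ∀ i, CoxeterTreeAux.TConvex T (F i) := fun i =>
    CoxeterTreeAux.fix_tconvex hact hT (a i)
  have hpair : ∀ i j, (F i ∩ F j).Nonempty := by
    intro i j
    rcases lt_trichotomy i j with hij | rfl | hij
    · obtain ⟨v, hv1, hv2⟩ := CoxeterTreeAux.exists_common_fixed_pair hact hT (hFne i)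
        (hFne j) (le_trans one_le_two (hβ i j hij)) (hrel₂ i j hij)
      exact ⟨v, hv1, hv2⟩
    · obtain ⟨v, hv⟩ := hFne i
      exact ⟨v, hv, hv⟩
    · obtain ⟨v, hv1, hv2⟩ := CoxeterTreeAux.exists_common_fixed_pair hact hT (hFne j)
        (hFne i) (le_trans one_le_two (hβ j i hij)) (hrel₂ j i hij)
      exact ⟨v, hv2, hv1⟩
  obtain ⟨p, hp⟩ := CoxeterTreeAux.hellyN hT n hn F hconv hpair
  refine ⟨p, ?_⟩
  intro h hmem
  induction hmem using Subgroup.closure_induction with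
  | mem x hx =>
    obtain ⟨i, rfl⟩ := hx
    exact hp i
  | one => exact one_smul Γ p
  | mul x y hx hy hx' hy' => rw [mul_smul, hy', hx']
  | inv x hx hx' =>
    have : x • (x⁻¹ • p) = x • p := by rw [smul_inv_smul, hx']
    have := MulAction.injective x this
    exact this
end
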